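/- Suppose G is a triangle-free graph on n vertices with no independent set of order k and with e edges, and suppose that every triangle-free graph on m vertices with no independent set of order k-1 has at least f(m) edges for each m. Then e ≥ max over vertices v of [f(n - deg(v) - 1) + deg(v) + Σ_{u ∈ N(v)}(deg(u) - 1)] is a valid lower bound; in particular, e ≥ f(n - d - 1) + d for a vertex v of degree d. -/

import Mathlib

/-- Suppose G is triangle-free on n vertices with no independent set of order k,
and f(m) is a lower bound on the number of edges of every triangle-free graph on
m vertices with no independent set of order k-1.  Then for every vertex v,
e ≥ f(n - deg(v) - 1) + deg(v) + Σ_{u ∈ N(v)} (deg(u) - 1); in particular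
e ≥ f(n - deg(v) - 1) + deg(v). -/
theorem stmt_13 {V : Type} [Fintype V] [DecidableEq V] (G : SimpleGraph V)
    [DecidableRel G.Adj] (k : ℕ) (f : ℕ → ℕ)
    (htf : G.CliqueFree 3)
    (hind : ¬ ∃ s : Finset V, s.card = k ∧
      ∀ a ∈ s, ∀ b ∈ s, a ≠ b → ¬ G.Adj a b)
    (hf : ∀ (W : Type) [Fintype W] [DecidableEq W] (H : SimpleGraph W)
      [DecidableRel H.Adj], H.CliqueFree 3 →
      (¬ ∃ s : Finset W, s.card = k - 1 ∧
        ∀ a ∈ s, ∀ b ∈ s, a ≠ b → ¬ H.Adj a b) →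
      f (Fintype.card W) ≤ H.edgeFinset.card) :
    ∀ v : V,
      f (Fintype.card V - G.degree v - 1) + G.degree v +
          ∑ u ∈ G.neighborFinset v, (G.degree u - 1) ≤ G.edgeFinset.card ∧
      f (Fintype.card V - G.degree v - 1) + G.degree v ≤ G.edgeFinset.card := by
  intro v
  -- k cannot be 0
  rcases Nat.eq_zero_or_pos k with hk0 | hk
  · exact absurd ⟨∅, by simp [hk0]⟩ hind
  -- the set of removed vertices
  set T : Finset V := insert v (G.neighborFinset v) with hT
  have hvT : v ∈ T := Finset.mem_insert_self _ _
  have hNT : ∀ u, G.Adj v u → u ∈ T := fun u hu =>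
    Finset.mem_insert_of_mem (by simpa using hu)
  -- the induced subgraph
  let s : Set V := ↑(Tᶜ)
  let H : SimpleGraph s := G.induce s
  haveI : DecidableRel H.Adj := fun a b => ‹DecidableRel G.Adj› a b
  have hmem : ∀ x : s, (x : V) ∉ T := fun x => by
    have := x.2
    simpa [s] using this
  -- triangle free
  have hHtf : H.CliqueFree 3 := htf.comap (SimpleGraph.Embedding.induce s).isContained
  -- no independent set of size k - 1
  have hHind : ¬ ∃ t : Finset s, t.card = k - 1 ∧
      ∀ a ∈ t, ∀ b ∈ t, a ≠ b → ¬ H.Adj a b := by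
    rintro ⟨t, htc, hti⟩
    refine hind ⟨insert v (t.image (Subtype.val)), ?_, ?_⟩
    · have hvn : v ∉ t.image Subtype.val := by
        intro hv
        obtain ⟨x, _, hx⟩ := Finset.mem_image.mp hv
        exact hmem x (hx ▸ hvT)
      rw [Finset.card_insert_of_notMem hvn,
        Finset.card_image_of_injective _ Subtype.val_injective, htc]
      omega
    · intro a ha b hb hab
      rcases Finset.mem_insert.mp ha with rfl | ha
      · obtain ⟨x, hx, rfl⟩ := Finset.mem_image.mp
          ((Finset.mem_insert.mp hb).resolve_left (Ne.symm hab))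
        intro hadj
        exact hmem x (hNT _ hadj)
      · obtain ⟨x, hx, rfl⟩ := Finset.mem_image.mp ha
        rcases Finset.mem_insert.mp hb with rfl | hb
        · intro hadj
          exact hmem x (hNT _ hadj.symm)
        · obtain ⟨y, hy, rfl⟩ := Finset.mem_image.mp hb
          exact hti x hx y hy (fun h => hab (congrArg Subtype.val h))
  -- cardinality of the vertex set
  have hcard : Fintype.card s = Fintype.card V - G.degree v - 1 := by
    have h1 : T.card = G.degree v + 1 := by
      rw [hT, Finset.card_insert_of_notMem (by simp), G.card_neighborFinset_eq_degree]
    have : Fintype.card s = Tᶜ.card := Fintype.card_coe _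
    rw [this, Finset.card_compl, h1]
    omega
  have hfH : f (Fintype.card V - G.degree v - 1) ≤ H.edgeFinset.card := by
    rw [← hcard]; exact hf s H hHtf hHind
  -- three disjoint edge sets
  set A : Finset (Sym2 V) := H.edgeFinset.image (Sym2.map Subtype.val) with hA
  set B : Finset (Sym2 V) := G.incidenceFinset v with hB
  set C : Finset (Sym2 V) :=
    (G.neighborFinset v).biUnion (fun u => G.incidenceFinset u \ {s(u, v)}) with hC
  have hAprop : ∀ e ∈ A, e ∈ G.edgeFinset ∧ ∀ x ∈ e, x ∉ T := by
    intro e he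
    obtain ⟨e', he', rfl⟩ := Finset.mem_image.mp he
    induction e' with
    | _ a b =>
      rw [SimpleGraph.mem_edgeFinset, SimpleGraph.mem_edgeSet] at he'
      have hadj : G.Adj (a : V) (b : V) := he'
      constructor
      · rw [Sym2.map_pair_eq, SimpleGraph.mem_edgeFinset, SimpleGraph.mem_edgeSet]
        exact hadj
      · intro x hx
        rw [Sym2.map_pair_eq] at hx
        rcases Sym2.mem_iff.mp hx with rfl | rfl
        · exact hmem a
        · exact hmem b
  have hBprop : ∀ e ∈ B, e ∈ G.edgeFinset ∧ v ∈ e := by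
    intro e he
    rw [hB, SimpleGraph.mem_incidenceFinset] at he
    exact ⟨SimpleGraph.mem_edgeFinset.mpr he.1, he.2⟩
  have hCprop : ∀ e ∈ C, e ∈ G.edgeFinset ∧
      ∃ u, G.Adj v u ∧ e ∈ G.incidenceSet u ∧ e ≠ s(u, v) := by
    intro e he
    rw [hC] at he
    obtain ⟨u, hu, he⟩ := Finset.mem_biUnion.mp he
    rw [Finset.mem_sdiff, SimpleGraph.mem_incidenceFinset, Finset.mem_singleton] at he
    rw [SimpleGraph.mem_neighborFinset] at hu
    exact ⟨SimpleGraph.mem_edgeFinset.mpr he.1.1, u, hu, he.1, he.2⟩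
  -- cardinalities
  have hAcard : A.card = H.edgeFinset.card :=
    Finset.card_image_of_injective _ (Sym2.map.injective Subtype.val_injective)
  have hBcard : B.card = G.degree v := by
    rw [hB]; exact G.card_incidenceFinset_eq_degree v
  have hCcard : C.card = ∑ u ∈ G.neighborFinset v, (G.degree u - 1) := by
    rw [hC, Finset.card_biUnion]
    · refine Finset.sum_congr rfl fun u hu => ?_
      rw [SimpleGraph.mem_neighborFinset] at hu
      rw [Finset.card_sdiff_of_subset (by
        simp only [Finset.singleton_subset_iff, SimpleGraph.mem_incidenceFinset]
        exact ⟨hu.symm, Sym2.mem_mk_left u v⟩)]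
      rw [Finset.card_singleton, G.card_incidenceFinset_eq_degree]
    · intro u hu u' hu' huu'
      rw [Finset.mem_coe, SimpleGraph.mem_neighborFinset] at hu hu'
      rw [Function.onFun, Finset.disjoint_left]
      intro e he he'
      rw [Finset.mem_sdiff, SimpleGraph.mem_incidenceFinset] at he he'
      have hadj : G.Adj u u' := G.adj_of_mem_incidenceSet huu' he.1 he'.1
      exact htf {v, u, u'} (SimpleGraph.is3Clique_triple_iff.mpr ⟨hu, hu', hadj⟩)
  -- disjointness
  have hAB : Disjoint A B := by
    rw [Finset.disjoint_left]
    intro e heA heB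
    exact (hAprop e heA).2 v (hBprop e heB).2 hvT
  have hAC : Disjoint A C := by
    rw [Finset.disjoint_left]
    intro e heA heC
    obtain ⟨_, u, hu, heu, _⟩ := hCprop e heC
    exact (hAprop e heA).2 u heu.2 (hNT u hu)
  have hBC : Disjoint B C := by
    rw [Finset.disjoint_left]
    intro e heB heC
    obtain ⟨_, u, hu, heu, hne⟩ := hCprop e heC
    have hev : e ∈ G.incidenceSet v := by
      rw [hB, SimpleGraph.mem_incidenceFinset] at heB
      exact heB
    have := G.incidenceSet_inter_incidenceSet_subset hu.symm.ne ⟨heu, hev⟩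
    exact hne this
  -- put it together
  have hsub : A ∪ B ∪ C ⊆ G.edgeFinset := by
    intro e he
    rcases Finset.mem_union.mp he with he | he
    · rcases Finset.mem_union.mp he with he | he
      · exact (hAprop e he).1
      · exact (hBprop e he).1
    · exact (hCprop e he).1
  have hunion : (A ∪ B ∪ C).card = A.card + B.card + C.card := by
    rw [Finset.card_union_of_disjoint, Finset.card_union_of_disjoint hAB]
    rw [Finset.disjoint_union_left]
    exact ⟨hAC, hBC⟩
  have hmain : f (Fintype.card V - G.degree v - 1) + G.degree v +
      ∑ u ∈ G.neighborFinset v, (G.degree u - 1) ≤ G.edgeFinset.card := by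
    calc f (Fintype.card V - G.degree v - 1) + G.degree v +
        ∑ u ∈ G.neighborFinset v, (G.degree u - 1)
        ≤ A.card + B.card + C.card := by
          rw [hAcard, hBcard, hCcard]
          exact Nat.add_le_add_right (Nat.add_le_add_right hfH _) _
      _ = (A ∪ B ∪ C).card := hunion.symm
      _ ≤ G.edgeFinset.card := Finset.card_le_card hsub
  exact ⟨hmain, le_trans (Nat.le_add_right _ _) hmain⟩
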